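/- Let p be a prime and λ a partition, and let G_λ = ⊕ᵢ ℤ/p^{λᵢ}ℤ. Then the cardinality of the exterior square ∧²G_λ (the quotient of G_λ ⊗ G_λ by the subgroup generated by all g ⊗ g) equals p^{Σ_{i≥1} λ'ᵢ(λ'ᵢ−1)/2}, where λ' is the conjugate partition. -/

import Mathlib

open TensorProduct

namespace ExtSqAux

variable (p m : ℕ) (l : Fin m → ℕ)

abbrev Gg : Type := ∀ i, ZMod (p ^ l i)

abbrev Idx (m : ℕ) : Type := {q : Fin m × Fin m // q.1 < q.2}

abbrev Tt : Type := ∀ q : Idx m, ZMod (p ^ l q.1.2)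

abbrev diagSet : Set (TensorProduct ℤ (Gg p m l) (Gg p m l)) :=
  {z | ∃ g : Gg p m l, z = g ⊗ₜ[ℤ] g}

abbrev Qq : Type :=
  (TensorProduct ℤ (Gg p m l) (Gg p m l)) ⧸ AddSubgroup.closure (diagSet p m l)

variable (hanti : ∀ i j : Fin m, i ≤ j → l j ≤ l i)

noncomputable def B : Gg p m l →ₗ[ℤ] Gg p m l →ₗ[ℤ] Tt p m l :=
  LinearMap.mk₂ ℤ
    (fun g h q =>
      ZMod.castHom (pow_dvd_pow p (hanti q.1.1 q.1.2 q.2.le)) (ZMod (p ^ l q.1.2)) (g q.1.1)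
          * h q.1.2
        - ZMod.castHom (pow_dvd_pow p (hanti q.1.1 q.1.2 q.2.le)) (ZMod (p ^ l q.1.2)) (h q.1.1)
          * g q.1.2)
    (by intro g g' h; funext q; simp [map_add]; ring)
    (by intro c g h; funext q
        simp only [Pi.smul_apply, map_zsmul, smul_sub, smul_mul_assoc, mul_smul_comm])
    (by intro g h h'; funext q; simp [map_add]; ring)
    (by intro c g h; funext q
        simp only [Pi.smul_apply, map_zsmul, smul_sub, smul_mul_assoc, mul_smul_comm])

noncomputable def phi : TensorProduct ℤ (Gg p m l) (Gg p m l) →ₗ[ℤ] Tt p m l :=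
  TensorProduct.lift (B p m l hanti)

theorem phi_vanish : ∀ z ∈ AddSubgroup.closure (diagSet p m l),
    phi p m l hanti z = 0 := by
  intro z hz
  refine (AddSubgroup.closure_le ((phi p m l hanti).toAddMonoidHom.ker)).mpr ?_ hz
  rintro z ⟨g, rfl⟩
  show phi p m l hanti (g ⊗ₜ g) = 0
  funext q
  rw [phi]; erw [TensorProduct.lift.tmul]; simp [B]

noncomputable def phi' : Qq p m l →+ Tt p m l :=
  QuotientAddGroup.lift _ (phi p m l hanti).toAddMonoidHom (phi_vanish p m l hanti)

/-- basis vector of `Gg` -/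
noncomputable def e (i : Fin m) : Gg p m l := Pi.single i 1

noncomputable def y (q : Idx m) : Qq p m l :=
  QuotientAddGroup.mk (e p m l q.1.1 ⊗ₜ[ℤ] e p m l q.1.2)

theorem smul_e (i : Fin m) : (p ^ l i : ℤ) • e p m l i = 0 := by
  funext a
  rcases eq_or_ne a i with rfl | h
  · simp only [e, Pi.smul_apply, Pi.single_eq_same, zsmul_eq_mul, mul_one, Pi.zero_apply]
    exact_mod_cast ZMod.natCast_self (p ^ l a)
  · simp [e, Pi.single_eq_of_ne h]

theorem zsmul_y (q : Idx m) : (p ^ l q.1.2 : ℤ) • y p m l q = 0 := by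
  have : ((p ^ l q.1.2 : ℤ) • (e p m l q.1.1 ⊗ₜ[ℤ] e p m l q.1.2)
      : TensorProduct ℤ (Gg p m l) (Gg p m l)) = 0 := by
    rw [← tmul_smul, smul_e, tmul_zero]
  calc (p ^ l q.1.2 : ℤ) • y p m l q
      = QuotientAddGroup.mk ((p ^ l q.1.2 : ℤ) • (e p m l q.1.1 ⊗ₜ[ℤ] e p m l q.1.2)) := rfl
    _ = 0 := by rw [this]; rfl

noncomputable def f (q : Idx m) : ZMod (p ^ l q.1.2) →+ Qq p m l :=
  ZMod.lift _ ⟨zmultiplesHom _ (y p m l q), by simpa using zsmul_y p m l q⟩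

noncomputable def psi : Tt p m l →+ Qq p m l :=
  ∑ q : Idx m, (f p m l q).comp (Pi.evalAddMonoidHom _ q)

theorem f_one (q : Idx m) : f p m l q 1 = y p m l q := by
  have : ((1 : ℤ) : ZMod (p ^ l q.1.2)) = 1 := by push_cast; rfl
  rw [f, ← this, ZMod.lift_coe]
  simp

theorem f_apply (hp : 0 < p) (q : Idx m) (x : ZMod (p ^ l q.1.2)) :
    f p m l q x = x.val • y p m l q := by
  haveI : NeZero (p ^ l q.1.2) := ⟨pow_ne_zero _ hp.ne'⟩
  have hx : x = x.val • (1 : ZMod (p ^ l q.1.2)) := by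
    rw [nsmul_eq_mul, mul_one, ZMod.natCast_val, ZMod.cast_id]
  calc f p m l q x = f p m l q (x.val • 1) := by rw [← hx]
    _ = x.val • f p m l q 1 := by rw [map_nsmul]
    _ = x.val • y p m l q := by rw [f_one]

theorem psi_single (q : Idx m) (x : ZMod (p ^ l q.1.2)) :
    psi p m l (Pi.single q x) = f p m l q x := by
  rw [psi, AddMonoidHom.finset_sum_apply]
  rw [Finset.sum_eq_single q]
  · simp
  · intro q' _ hq'
    simp [Pi.single_eq_of_ne hq']
  · simp

theorem phi'_y (q : Idx m) : phi' p m l hanti (y p m l q) = Pi.single q 1 := by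
  obtain ⟨⟨i, j⟩, hij⟩ := q
  funext q'
  obtain ⟨⟨a, b⟩, hab⟩ := q'
  show (B p m l hanti (e p m l i) (e p m l j)) _ = _
  rcases eq_or_ne (⟨(a, b), hab⟩ : Idx m) ⟨(i, j), hij⟩ with h | h
  · obtain ⟨rfl, rfl⟩ : a = i ∧ b = j := by
      have := congrArg Subtype.val h; exact ⟨congrArg Prod.fst this, congrArg Prod.snd this⟩
    have hne : a ≠ b := Fin.ne_of_lt hij
    simp [B, e, Pi.single_eq_same, Pi.single_eq_of_ne hne.symm, Pi.single_eq_of_ne hne,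
      ZMod.cast_one (pow_dvd_pow p (hanti a b hij.le))]
  · rw [Pi.single_eq_of_ne h]
    have h2 : ¬(a = j ∧ b = i) := by
      rintro ⟨rfl, rfl⟩; exact absurd (hab.trans hij) (lt_irrefl _)
    have h1 : ¬(a = i ∧ b = j) := by
      rintro ⟨rfl, rfl⟩; exact h rfl
    simp only [B, LinearMap.mk₂_apply, e]
    rcases eq_or_ne a i with rfl | ha
    · have hb : b ≠ j := fun hb => h1 ⟨rfl, hb⟩
      have haj : a ≠ j := Fin.ne_of_lt hij
      simp [Pi.single_eq_of_ne hb, Pi.single_eq_of_ne haj]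
    · rcases eq_or_ne a j with rfl | ha'
      · have hb : b ≠ i := fun hb => h2 ⟨rfl, hb⟩
        simp [Pi.single_eq_of_ne ha, Pi.single_eq_of_ne hb]
      · simp [Pi.single_eq_of_ne ha, Pi.single_eq_of_ne ha']

theorem phi'_psi (hp : 0 < p) (t : Tt p m l) :
    phi' p m l hanti (psi p m l t) = t := by
  rw [psi, AddMonoidHom.finset_sum_apply, map_sum]
  have : ∀ q : Idx m, phi' p m l hanti (((f p m l q).comp (Pi.evalAddMonoidHom _ q)) t)
      = Pi.single q (t q) := by
    intro q
    haveI : NeZero (p ^ l q.1.2) := ⟨pow_ne_zero _ hp.ne'⟩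
    rw [AddMonoidHom.comp_apply]
    show phi' p m l hanti (f p m l q (t q)) = _
    rw [f_apply p m l hp, map_nsmul, phi'_y, ← Pi.single_smul]
    rw [nsmul_eq_mul, mul_one, ZMod.natCast_val, ZMod.cast_id]
  rw [Finset.sum_congr rfl fun q _ => this q]
  funext q
  rw [Finset.sum_apply]
  exact Fintype.sum_pi_single q t

theorem mk_single_tmul_mem_range (hp : 0 < p) (i j : Fin m)
    (x : ZMod (p ^ l i)) (z : ZMod (p ^ l j)) :
    (QuotientAddGroup.mk (Pi.single i x ⊗ₜ[ℤ] Pi.single j z) : Qq p m l)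
      ∈ (psi p m l).range := by
  haveI : NeZero (p ^ l i) := ⟨pow_ne_zero _ hp.ne'⟩
  haveI : NeZero (p ^ l j) := ⟨pow_ne_zero _ hp.ne'⟩
  have hx : (Pi.single i x : Gg p m l) = x.val • e p m l i := by
    rw [e, ← Pi.single_smul, nsmul_eq_mul, mul_one, ZMod.natCast_val, ZMod.cast_id]
  have hz : (Pi.single j z : Gg p m l) = z.val • e p m l j := by
    rw [e, ← Pi.single_smul, nsmul_eq_mul, mul_one, ZMod.natCast_val, ZMod.cast_id]
  have key : (Pi.single i x ⊗ₜ[ℤ] Pi.single j z : TensorProduct ℤ (Gg p m l) (Gg p m l))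
      = (x.val * z.val) • (e p m l i ⊗ₜ[ℤ] e p m l j) := by
    rw [hx, hz, tmul_smul, ← TensorProduct.smul_tmul', smul_smul, mul_comm z.val]
  rw [key]
  have hmk : (QuotientAddGroup.mk ((x.val * z.val) • (e p m l i ⊗ₜ[ℤ] e p m l j)) : Qq p m l)
      = (x.val * z.val) • (QuotientAddGroup.mk (e p m l i ⊗ₜ[ℤ] e p m l j) : Qq p m l) := rfl
  rw [hmk]
  refine AddSubgroup.nsmul_mem _ ?_ _
  rcases lt_trichotomy i j with hij | rfl | hji
  · have : (QuotientAddGroup.mk (e p m l i ⊗ₜ[ℤ] e p m l j) : Qq p m l)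
        = psi p m l (Pi.single (⟨(i, j), hij⟩ : Idx m) 1) := by
      rw [psi_single, f_one]; rfl
    rw [this]; exact ⟨_, rfl⟩
  · have : (QuotientAddGroup.mk (e p m l i ⊗ₜ[ℤ] e p m l i) : Qq p m l) = 0 := by
      rw [QuotientAddGroup.eq_zero_iff]
      exact AddSubgroup.subset_closure ⟨e p m l i, rfl⟩
    rw [this]; exact zero_mem _
  · have hsum : (e p m l i ⊗ₜ[ℤ] e p m l j + e p m l j ⊗ₜ[ℤ] e p m l i
        : TensorProduct ℤ (Gg p m l) (Gg p m l)) ∈ AddSubgroup.closure (diagSet p m l) := by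
      have hexp : (e p m l i ⊗ₜ[ℤ] e p m l j + e p m l j ⊗ₜ[ℤ] e p m l i
          : TensorProduct ℤ (Gg p m l) (Gg p m l))
          = (e p m l i + e p m l j) ⊗ₜ[ℤ] (e p m l i + e p m l j)
            - e p m l i ⊗ₜ[ℤ] e p m l i - e p m l j ⊗ₜ[ℤ] e p m l j := by
        rw [TensorProduct.tmul_add, TensorProduct.add_tmul, TensorProduct.add_tmul]
        abel
      rw [hexp]
      refine sub_mem (sub_mem (AddSubgroup.subset_closure ⟨_, rfl⟩)
        (AddSubgroup.subset_closure ⟨_, rfl⟩)) (AddSubgroup.subset_closure ⟨_, rfl⟩)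
    have hneg : (QuotientAddGroup.mk (e p m l i ⊗ₜ[ℤ] e p m l j) : Qq p m l)
        = - (QuotientAddGroup.mk (e p m l j ⊗ₜ[ℤ] e p m l i) : Qq p m l) := by
      rw [eq_neg_iff_add_eq_zero]
      show (QuotientAddGroup.mk (e p m l i ⊗ₜ[ℤ] e p m l j + e p m l j ⊗ₜ[ℤ] e p m l i)
        : Qq p m l) = 0
      rw [QuotientAddGroup.eq_zero_iff]
      exact hsum
    rw [hneg]
    refine neg_mem ?_
    have : (QuotientAddGroup.mk (e p m l j ⊗ₜ[ℤ] e p m l i) : Qq p m l)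
        = psi p m l (Pi.single (⟨(j, i), hji⟩ : Idx m) 1) := by
      rw [psi_single, f_one]; rfl
    rw [this]; exact ⟨_, rfl⟩

theorem psi_surjective (hp : 0 < p) : Function.Surjective (psi p m l) := by
  intro x
  obtain ⟨z, rfl⟩ := QuotientAddGroup.mk_surjective x
  suffices h : (QuotientAddGroup.mk z : Qq p m l) ∈ (psi p m l).range by
    obtain ⟨t, ht⟩ := h; exact ⟨t, ht⟩
  have hz : z ∈ Submodule.span ℤ {t : TensorProduct ℤ (Gg p m l) (Gg p m l) |
      ∃ a b : Gg p m l, a ⊗ₜ[ℤ] b = t} := by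
    erw [TensorProduct.span_tmul_eq_top]; trivial
  induction hz using Submodule.span_induction with
  | mem t ht =>
    obtain ⟨a, b, rfl⟩ := ht
    have ha : a = ∑ i, Pi.single i (a i) := by
      funext i; rw [Finset.sum_apply]; exact (Fintype.sum_pi_single i a).symm
    have hb : b = ∑ j, Pi.single j (b j) := by
      funext j; rw [Finset.sum_apply]; exact (Fintype.sum_pi_single j b).symm
    have hab : (a ⊗ₜ[ℤ] b : TensorProduct ℤ (Gg p m l) (Gg p m l))
        = ∑ i, ∑ j, Pi.single i (a i) ⊗ₜ[ℤ] Pi.single j (b j) := by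
      conv_lhs => rw [ha, hb]
      rw [TensorProduct.sum_tmul]
      exact Finset.sum_congr rfl fun i _ => TensorProduct.tmul_sum _ _ _
    rw [hab]
    have hmk : (QuotientAddGroup.mk (∑ i, ∑ j, Pi.single i (a i) ⊗ₜ[ℤ] Pi.single j (b j))
        : Qq p m l) = ∑ i, ∑ j,
          (QuotientAddGroup.mk (Pi.single i (a i) ⊗ₜ[ℤ] Pi.single j (b j)) : Qq p m l) := by
      rw [← QuotientAddGroup.mk'_apply, map_sum]
      exact Finset.sum_congr rfl fun i _ => by rw [map_sum]; rfl
    rw [hmk]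
    exact sum_mem fun i _ => sum_mem fun j _ =>
      mk_single_tmul_mem_range p m l hp i j (a i) (b j)
  | zero =>
    have : (QuotientAddGroup.mk (0 : TensorProduct ℤ (Gg p m l) (Gg p m l)) : Qq p m l) = 0 := rfl
    rw [this]; exact zero_mem _
  | add u v hu hv ihu ihv =>
    have : (QuotientAddGroup.mk (u + v) : Qq p m l)
        = QuotientAddGroup.mk u + QuotientAddGroup.mk v := rfl
    rw [this]; exact add_mem ihu ihv
  | smul c u hu ihu =>
    have : (QuotientAddGroup.mk (c • u) : Qq p m l) = c • (QuotientAddGroup.mk u : Qq p m l) := rfl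
    rw [this]; exact AddSubgroup.zsmul_mem _ ihu _

include hanti in
theorem card_Q (hp : 0 < p) :
    Nat.card (Qq p m l) = p ^ (∑ q : Idx m, l q.1.2) := by
  have hbij : Function.Bijective (psi p m l) :=
    ⟨Function.LeftInverse.injective (phi'_psi p m l hanti hp), psi_surjective p m l hp⟩
  rw [← Nat.card_eq_of_bijective _ hbij, Nat.card_pi, ← Finset.prod_pow_eq_pow_sum]
  exact Finset.prod_congr rfl fun q _ => Nat.card_zmod _

theorem mem_iff_lt_card {m : ℕ} (S : Finset (Fin m))
    (hS : ∀ i j : Fin m, i ≤ j → j ∈ S → i ∈ S) (j : Fin m) : j ∈ S ↔ j.val < S.card := by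
  constructor
  · intro hj
    have hsub : Finset.Iic j ⊆ S := fun i hi => hS i j (Finset.mem_Iic.mp hi) hj
    have := Finset.card_le_card hsub
    rw [Fin.card_Iic] at this
    omega
  · intro h
    by_contra hj
    have hsub : S ⊆ Finset.Iio j := fun i hi =>
      Finset.mem_Iio.mpr (lt_of_not_ge fun hle => hj (hS j i hle hi))
    have := Finset.card_le_card hsub
    rw [Fin.card_Iio] at this
    omega

theorem sum_range_ite {M : Type*} [AddCommMonoid M] (c n : ℕ) (h : c ≤ n) (f : ℕ → M) :
    ∑ t ∈ Finset.range n, (if t < c then f t else 0) = ∑ t ∈ Finset.range c, f t := by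
  rw [← Finset.sum_filter]
  congr 1
  ext t
  simp only [Finset.mem_filter, Finset.mem_range]
  omega

theorem comb (s m : ℕ) (l : Fin m → ℕ) (hanti : ∀ i j : Fin m, i ≤ j → l j ≤ l i)
    (hls : ∀ i, l i ≤ s) (conj : ℕ → ℕ)
    (hconj : ∀ i, conj i = Nat.card {j : Fin m // i ≤ l j}) :
    ∑ q : Idx m, l q.1.2 = ∑ k ∈ Finset.Icc 1 s, conj k * (conj k - 1) / 2 := by
  have hc : ∀ k, conj k = (Finset.univ.filter (fun j : Fin m => k ≤ l j)).card := by
    intro k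
    rw [hconj, Nat.card_eq_fintype_card, Fintype.card_subtype]
  have hmem : ∀ k (j : Fin m), k ≤ l j ↔ j.val < conj k := by
    intro k j
    rw [hc]
    have := mem_iff_lt_card (Finset.univ.filter (fun j : Fin m => k ≤ l j))
      (fun i j hij hj => by
        simp only [Finset.mem_filter, Finset.mem_univ, true_and] at hj ⊢
        exact le_trans hj (hanti i j hij)) j
    simpa using this
  have hcm : ∀ k, conj k ≤ m := by
    intro k
    rw [hc]
    exact le_trans (Finset.card_filter_le _ _) (by simp)
  have h1 : ∑ q : Idx m, l q.1.2
      = ∑ q ∈ Finset.univ.filter (fun q : Fin m × Fin m => q.1 < q.2), l q.2 :=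
    (Finset.sum_subtype (Finset.univ.filter (fun q : Fin m × Fin m => q.1 < q.2))
      (fun q => by simp) (fun q => l q.2)).symm
  rw [h1, Finset.sum_filter, Fintype.sum_prod_type]
  have h2 : ∀ i j : Fin m, (if i < j then l j else 0)
      = ∑ k ∈ Finset.Icc 1 s, (if i < j ∧ k ≤ l j then 1 else 0) := by
    intro i j
    by_cases hij : i < j
    · simp only [hij, true_and, if_true]
      rw [← Finset.sum_filter]
      have hfil : (Finset.Icc 1 s).filter (fun k => k ≤ l j) = Finset.Icc 1 (l j) := by
        ext k
        simp only [Finset.mem_filter, Finset.mem_Icc]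
        have := hls j
        omega
      rw [hfil, Finset.sum_const, smul_eq_mul, mul_one, Nat.card_Icc]
      omega
    · simp [hij]
  rw [Finset.sum_congr rfl fun i _ => Finset.sum_congr rfl fun j _ => h2 i j]
  rw [Finset.sum_congr rfl fun i _ => Finset.sum_comm (s := Finset.univ)
    (t := Finset.Icc 1 s) (f := fun j k => if i < j ∧ k ≤ l j then 1 else 0)]
  rw [Finset.sum_comm]
  refine Finset.sum_congr rfl fun k _ => ?_
  -- goal: ∑ i, ∑ j, ite (i < j ∧ k ≤ l j) 1 0 = conj k * (conj k - 1) / 2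
  rw [Finset.sum_comm]
  have h3 : ∀ j : Fin m, (∑ i : Fin m, if i < j ∧ k ≤ l j then 1 else 0)
      = (if j.val < conj k then j.val else 0) := by
    intro j
    by_cases hk : k ≤ l j
    · rw [if_pos ((hmem k j).mp hk)]
      simp only [hk, and_true]
      have : ∀ i : Fin m, (if i < j then 1 else 0) = (fun t => if t < j.val then 1 else 0) i.val := by
        intro i; simp only [Fin.lt_def]
      rw [Finset.sum_congr rfl fun i _ => this i,
        Fin.sum_univ_eq_sum_range (fun t => if t < j.val then 1 else 0) m,
        sum_range_ite j.val m j.isLt.le, Finset.sum_const, Finset.card_range,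
        smul_eq_mul, mul_one]
    · rw [if_neg (fun h => hk ((hmem k j).mpr h))]
      simp [hk]
  rw [Finset.sum_congr rfl fun j _ => h3 j]
  have : ∀ j : Fin m, (if j.val < conj k then j.val else 0)
      = (fun t => if t < conj k then t else 0) j.val := fun j => rfl
  rw [Finset.sum_congr rfl fun j _ => this j,
    Fin.sum_univ_eq_sum_range (fun t => if t < conj k then t else 0) m,
    sum_range_ite (conj k) m (hcm k), Finset.sum_range_id]

end ExtSqAux

open TensorProduct in
/-- Let `p` be prime, `λ` a partition with parts `λ₁ ≥ … ≥ λ_m` (all parts at most `s`),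
and `G_λ = ⊕ᵢ ℤ/p^{λᵢ}ℤ`. The exterior square `∧²G_λ`, i.e. the quotient of
`G_λ ⊗_ℤ G_λ` by the subgroup generated by all `g ⊗ g`, has cardinality
`p^{Σ_{i≥1} λ'ᵢ(λ'ᵢ−1)/2}` where `λ'` is the conjugate partition. -/
theorem card_exterior_square_abelian_p_group (p : ℕ) (hp : p.Prime) (s m : ℕ)
    (l : Fin m → ℕ) (hanti : ∀ i j : Fin m, i ≤ j → l j ≤ l i) (hls : ∀ i, l i ≤ s)
    (conj : ℕ → ℕ) (hconj : ∀ i, conj i = Nat.card {j : Fin m // i ≤ l j}) :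
    Nat.card
        ((TensorProduct ℤ (∀ i, ZMod (p ^ l i)) (∀ i, ZMod (p ^ l i))) ⧸
          AddSubgroup.closure
            {z : TensorProduct ℤ (∀ i, ZMod (p ^ l i)) (∀ i, ZMod (p ^ l i)) |
              ∃ g : ∀ i, ZMod (p ^ l i), z = g ⊗ₜ[ℤ] g}) =
      p ^ (∑ i ∈ Finset.Icc 1 s, conj i * (conj i - 1) / 2) := by
  have h1 : Nat.card (ExtSqAux.Qq p m l) = p ^ (∑ q : ExtSqAux.Idx m, l q.1.2) :=
    ExtSqAux.card_Q p m l hanti hp.pos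
  rw [← ExtSqAux.comb s m l hanti hls conj hconj]
  exact h1
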